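/- For every integer n ≥ 3, the derangement polynomials satisfy the identity D_n(x) = Σ_{i=1}^{n-3} (n-i)·D_{n-i}(x) + 3·D_2(x) + Σ_{i=3}^{n} (x-1)^i. -/

import Mathlib

open Polynomial Finset

/-- The derangement polynomial `D_n(x) = ∑_{k=0}^n C(n,k)·k!·(x-1)^{n-k}`. -/
noncomputable def derPoly (n : ℕ) : Polynomial ℤ :=
  ∑ k ∈ Finset.range (n + 1), ((n.choose k * k.factorial : ℤ)) • (X - 1) ^ (n - k)

lemma derPoly_succ (n : ℕ) :
    derPoly (n + 1) = ((n + 1 : ℕ) : Polynomial ℤ) * derPoly n + (X - 1) ^ (n + 1) := by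
  unfold derPoly
  rw [Finset.sum_range_succ', Finset.mul_sum]
  simp only [Nat.choose_zero_right, Nat.factorial_zero, Nat.cast_one, mul_one, one_smul,
    Nat.sub_zero]
  congr 1
  refine Finset.sum_congr rfl fun k hk => ?_
  have h1 : (n + 1).choose (k + 1) * (k + 1).factorial = (n + 1) * (n.choose k * k.factorial) := by
    rw [Nat.factorial_succ, ← mul_assoc, ← Nat.add_one_mul_choose_eq]
    ring
  have h1' : (((n + 1).choose (k + 1) : ℤ) * ((k + 1).factorial : ℤ)) =
      ((n + 1 : ℕ) : ℤ) * (((n.choose k : ℤ)) * ((k.factorial : ℤ))) := by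
    exact_mod_cast congrArg (Nat.cast : ℕ → ℤ) h1
  have h2 : n + 1 - (k + 1) = n - k := by omega
  rw [h2, h1', mul_smul]
  rw [zsmul_eq_mul]
  push_cast
  ring

lemma derPoly_aux (m : ℕ) :
    derPoly (m + 3) =
      (∑ j ∈ Finset.range m, ((m + 2 - j : ℕ) : Polynomial ℤ) * derPoly (m + 2 - j)) +
        3 * derPoly 2 + ∑ j ∈ Finset.range (m + 1), (X - 1) ^ (3 + j) := by
  induction m with
  | zero =>
    have := derPoly_succ 2
    simpa using this
  | succ m ih =>
    have step : derPoly (m + 4) = ((m + 4 : ℕ) : Polynomial ℤ) * derPoly (m + 3) +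
        (X - 1) ^ (m + 4) := derPoly_succ (m + 3)
    rw [show m + 1 + 3 = m + 4 from rfl, step, Finset.sum_range_succ', Finset.sum_range_succ]
    have e1 : ∀ j ∈ Finset.range m, ((m + 1 + 2 - (j + 1) : ℕ) : Polynomial ℤ) *
        derPoly (m + 1 + 2 - (j + 1)) = ((m + 2 - j : ℕ) : Polynomial ℤ) * derPoly (m + 2 - j) := by
      intro j hj
      congr 2 <;> omega
    rw [Finset.sum_congr rfl e1]
    have e2 : ((m + 1 + 2 - 0 : ℕ) : Polynomial ℤ) * derPoly (m + 1 + 2 - 0) =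
        ((m + 3 : ℕ) : Polynomial ℤ) * derPoly (m + 3) := by rw [Nat.sub_zero]
    rw [e2, show 3 + (m + 1) = m + 4 from by omega]
    push_cast
    linear_combination ih

theorem derPoly_identity (n : ℕ) (hn : 3 ≤ n) :
    derPoly n =
      (∑ i ∈ Finset.Icc 1 (n - 3), ((n - i : ℕ) : Polynomial ℤ) * derPoly (n - i)) +
        3 * derPoly 2 + ∑ i ∈ Finset.Icc 3 n, (X - 1) ^ i := by
  obtain ⟨m, rfl⟩ := Nat.exists_eq_add_of_le hn
  have h3 : 3 + m - 3 = m := by omega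
  rw [h3, ← Finset.Ico_add_one_right_eq_Icc, ← Finset.Ico_add_one_right_eq_Icc, Finset.sum_Ico_eq_sum_range,
    Finset.sum_Ico_eq_sum_range]
  have hr1 : m + 1 - 1 = m := by omega
  have hr2 : 3 + m + 1 - 3 = m + 1 := by omega
  rw [hr1, hr2]
  have e1 : ∀ j ∈ Finset.range m, ((3 + m - (1 + j) : ℕ) : Polynomial ℤ) *
      derPoly (3 + m - (1 + j)) = ((m + 2 - j : ℕ) : Polynomial ℤ) * derPoly (m + 2 - j) := by
    intro j hj
    congr 2 <;> omega
  rw [Finset.sum_congr rfl e1, show 3 + m = m + 3 from by omega]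
  exact derPoly_aux m
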